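/- Let n ≥ 1, let V ⊆ ℝ^{2n} be open, let F : V → ℝ be C², and suppose that (DY_F(x))² = I_{2n} for every x ∈ V, where DY_F(x) is the Jacobian matrix of the Hamiltonian vector field Y_F at x. Define p₁(x) := x + Y_F(x) and p₂(x) := x − Y_F(x). Then for every x ∈ V: (i) the Jacobians Dp₁(x) and Dp₂(x) each have rank exactly n; and (ii) the images of Dp₁(x) and of Dp₂(x) are ω-isotropic (hence Lagrangian) subspaces of ℝ^{2n}: ω(Dp₁(x)u, Dp₁(x)v) = 0 and ω(Dp₂(x)u, Dp₂(x)v) = 0 for all u, v ∈ ℝ^{2n}. (This is the key step showing that any improper affine sphere whose shape operator squares to the identity is locally a center-chord improper affine sphere.) -/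

import Mathlib

open Matrix

/-- The standard symplectic form on `ℝ^{2n}`, indexed by `Fin n ⊕ Fin n`. -/
noncomputable def sform (n : ℕ) (u v : Fin n ⊕ Fin n → ℝ) : ℝ :=
  ∑ i : Fin n, (u (Sum.inl i) * v (Sum.inr i) - u (Sum.inr i) * v (Sum.inl i))

/-- The Hamiltonian vector field of `F`. -/
noncomputable def hamVF (n : ℕ) (F : (Fin n ⊕ Fin n → ℝ) → ℝ) (x : Fin n ⊕ Fin n → ℝ) :
    Fin n ⊕ Fin n → ℝ :=
  Sum.elim (fun i => -(fderiv ℝ F x (Pi.single (Sum.inr i) 1)))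
    (fun i => fderiv ℝ F x (Pi.single (Sum.inl i) 1))

/-- The Jacobian matrix of a map between finite-dimensional coordinate spaces. -/
noncomputable def jacM {ι κ : Type*} [Fintype ι] [DecidableEq ι] [Fintype κ]
    (g : (ι → ℝ) → (κ → ℝ)) (r : ι → ℝ) : Matrix κ ι ℝ :=
  Matrix.of fun i j => fderiv ℝ g r (Pi.single j 1) i

/-- The matrix of the standard symplectic form. -/
noncomputable def symplJ (n : ℕ) : Matrix (Fin n ⊕ Fin n) (Fin n ⊕ Fin n) ℝ :=
  Matrix.fromBlocks 0 1 (-1) 0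

lemma symplJ_sq (n : ℕ) : symplJ n * symplJ n = -1 := by
  simp [symplJ, Matrix.fromBlocks_multiply, ← Matrix.fromBlocks_one, Matrix.fromBlocks_neg]

lemma symplJ_transpose (n : ℕ) : (symplJ n)ᵀ = -(symplJ n) := by
  simp [symplJ, Matrix.fromBlocks_transpose, Matrix.fromBlocks_neg]

lemma symplJ_isUnit_det (n : ℕ) : IsUnit (symplJ n).det := by
  apply Matrix.isUnit_det_of_right_inverse (B := -(symplJ n))
  rw [mul_neg, symplJ_sq, neg_neg]

lemma sform_eq (n : ℕ) (u v : Fin n ⊕ Fin n → ℝ) :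
    sform n u v = u ⬝ᵥ (symplJ n).mulVec v := by
  simp [sform, symplJ, Matrix.mulVec, dotProduct, Fintype.sum_sum_type,
    Matrix.one_apply, mul_ite, Finset.sum_ite_eq', Finset.sum_sub_distrib,
    sub_eq_add_neg, Finset.sum_add_distrib, Finset.sum_neg_distrib]

lemma rank_add_le' {m : Type*} [Fintype m] [DecidableEq m] (A B : Matrix m m ℝ) :
    (A + B).rank ≤ A.rank + B.rank := by
  rw [Matrix.rank, Matrix.rank, Matrix.rank]
  have hle : LinearMap.range (A + B).mulVecLin ≤
      LinearMap.range A.mulVecLin ⊔ LinearMap.range B.mulVecLin := by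
    rintro _ ⟨v, rfl⟩
    rw [Matrix.mulVecLin_apply, Matrix.add_mulVec]
    exact Submodule.add_mem_sup ⟨v, rfl⟩ ⟨v, rfl⟩
  refine le_trans (Submodule.finrank_mono hle) ?_
  have := Submodule.finrank_sup_add_finrank_inf_eq
    (LinearMap.range A.mulVecLin) (LinearMap.range B.mulVecLin)
  omega

lemma rank_two' {m : Type*} [Fintype m] [DecidableEq m] :
    ((2 : Matrix m m ℝ)).rank = Fintype.card m := by
  have h2 : (2 : Matrix m m ℝ) = (2 : ℝ) • 1 := by
    rw [show (2 : ℝ) = 1 + 1 by norm_num, add_smul, one_smul, one_add_one_eq_two]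
  have h : (2 : Matrix m m ℝ) * ((2⁻¹ : ℝ) • 1) = 1 := by
    rw [h2, smul_mul_smul_comm]; norm_num
  have hu : IsUnit (2 : Matrix m m ℝ) :=
    (Matrix.isUnit_iff_isUnit_det _).2 (Matrix.isUnit_det_of_right_inverse h)
  rw [Matrix.rank_of_isUnit _ hu]

/-- Key algebraic lemma. -/
lemma key_lemma (n : ℕ) (A : Matrix (Fin n ⊕ Fin n) (Fin n ⊕ Fin n) ℝ)
    (hAA : A * A = 1) (hAtJ : Aᵀ * symplJ n = -(symplJ n * A)) :
    (1 + A).rank = n ∧ (1 - A).rank = n ∧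
    ((1 + A)ᵀ * (symplJ n * (1 + A)) = 0) ∧ ((1 - A)ᵀ * (symplJ n * (1 - A)) = 0) := by
  have h0₁ : (1 + A)ᵀ * (symplJ n * (1 + A)) = 0 := by
    have e : (1 + A)ᵀ * (symplJ n * (1 + A)) =
        symplJ n + symplJ n * A + Aᵀ * symplJ n + Aᵀ * symplJ n * A := by
      rw [Matrix.transpose_add, Matrix.transpose_one]; noncomm_ring
    rw [e, hAtJ, neg_mul, mul_assoc, hAA, mul_one]; abel
  have h0₂ : (1 - A)ᵀ * (symplJ n * (1 - A)) = 0 := by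
    have e : (1 - A)ᵀ * (symplJ n * (1 - A)) =
        symplJ n - symplJ n * A - Aᵀ * symplJ n + Aᵀ * symplJ n * A := by
      rw [Matrix.transpose_sub, Matrix.transpose_one]; noncomm_ring
    rw [e, hAtJ, neg_mul, mul_assoc, hAA, mul_one]; abel
  have hcard : Fintype.card (Fin n ⊕ Fin n) = 2 * n := by simp [two_mul]
  have hle : ∀ M : Matrix (Fin n ⊕ Fin n) (Fin n ⊕ Fin n) ℝ,
      Mᵀ * (symplJ n * M) = 0 → M.rank ≤ n := by
    intro M h0
    have h := Matrix.rank_add_rank_le_card_of_mul_eq_zero h0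
    rw [Matrix.rank_transpose,
      Matrix.rank_mul_eq_right_of_isUnit_det _ _ (symplJ_isUnit_det n), hcard] at h
    omega
  have h1 : (1 + A).rank ≤ n := hle _ h0₁
  have h2 : (1 - A).rank ≤ n := hle _ h0₂
  have hsum : (1 + A) + (1 - A) = (2 : Matrix (Fin n ⊕ Fin n) (Fin n ⊕ Fin n) ℝ) := by
    noncomm_ring
    rw [two_smul, one_add_one_eq_two]
  have hge : 2 * n ≤ (1 + A).rank + (1 - A).rank := by
    have := rank_add_le' (1 + A) (1 - A)
    rw [hsum, rank_two', hcard] at this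
    omega
  exact ⟨by omega, by omega, h0₁, h0₂⟩

theorem stmt17 (n : ℕ) (hn : 1 ≤ n) (V : Set (Fin n ⊕ Fin n → ℝ)) (hV : IsOpen V)
    (F : (Fin n ⊕ Fin n → ℝ) → ℝ) (hF : ContDiffOn ℝ 2 F V)
    (hsq : ∀ x ∈ V, jacM (hamVF n F) x * jacM (hamVF n F) x = 1)
    (p₁ p₂ : (Fin n ⊕ Fin n → ℝ) → (Fin n ⊕ Fin n → ℝ))
    (hp₁ : ∀ x, p₁ x = x + hamVF n F x) (hp₂ : ∀ x, p₂ x = x - hamVF n F x) :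
    ∀ x ∈ V,
      -- (i) the Jacobians of `p₁` and `p₂` have rank exactly `n`
      (jacM p₁ x).rank = n ∧ (jacM p₂ x).rank = n ∧
      -- (ii) the images of `Dp₁(x)` and `Dp₂(x)` are ω-isotropic
      (∀ u v : Fin n ⊕ Fin n → ℝ,
        sform n ((jacM p₁ x).mulVec u) ((jacM p₁ x).mulVec v) = 0) ∧
      (∀ u v : Fin n ⊕ Fin n → ℝ,
        sform n ((jacM p₂ x).mulVec u) ((jacM p₂ x).mulVec v) = 0) := by
  intro x hx
  have hc2 : ContDiffAt ℝ 2 F x := hF.contDiffAt (hV.mem_nhds hx)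
  have hd : DifferentiableAt ℝ (fderiv ℝ F) x :=
    (hc2.fderiv_right (m := 1) (by norm_num)).differentiableAt one_ne_zero
  set f'' := fderiv ℝ (fderiv ℝ F) x with hf''
  have hsymm : ∀ v w, f'' v w = f'' w v := hc2.isSymmSndFDerivAt (by simp)
  set L : (Fin n ⊕ Fin n) → ((Fin n ⊕ Fin n → ℝ) →L[ℝ] ℝ) := fun i =>
    Sum.elim
      (fun k => -((ContinuousLinearMap.apply ℝ ℝ (Pi.single (Sum.inr k) 1)).comp f''))
      (fun k => (ContinuousLinearMap.apply ℝ ℝ (Pi.single (Sum.inl k) 1)).comp f'') i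
    with hLdef
  have hL : ∀ i, HasFDerivAt (fun y => hamVF n F y i) (L i) x := by
    intro i
    have hd' : HasFDerivAt (fderiv ℝ F) f'' x := hd.hasFDerivAt
    cases i with
    | inl k =>
      have := (((ContinuousLinearMap.apply ℝ ℝ
        (Pi.single (Sum.inr k) (1:ℝ))).hasFDerivAt).comp x hd').neg
      simpa [hamVF, Function.comp_def, hLdef, Pi.neg_def] using this
    | inr k =>
      have := ((ContinuousLinearMap.apply ℝ ℝ
        (Pi.single (Sum.inl k) (1:ℝ))).hasFDerivAt).comp x hd'
      simpa [hamVF, Function.comp_def, hLdef] using this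
  have hY : HasFDerivAt (hamVF n F) (ContinuousLinearMap.pi L) x :=
    hasFDerivAt_pi.2 fun i => hL i
  set A := jacM (hamVF n F) x with hAdef
  have hA : ∀ i j, A i j = L i (Pi.single j 1) := by
    intro i j
    simp [hAdef, jacM, hY.fderiv]
  -- entries of A in terms of second derivatives
  have hAinl : ∀ (k : Fin n) j, A (Sum.inl k) j =
      -(f'' (Pi.single j 1) (Pi.single (Sum.inr k) 1)) := by
    intro k j; rw [hA]; simp [hLdef]
  have hAinr : ∀ (k : Fin n) j, A (Sum.inr k) j =
      f'' (Pi.single j 1) (Pi.single (Sum.inl k) 1) := by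
    intro k j; rw [hA]; simp [hLdef]
  -- J * A is symmetric
  have hJA : (symplJ n * A)ᵀ = symplJ n * A := by
    ext i j
    have hmul : ∀ a b, (symplJ n * A) a b =
        Sum.elim (fun k => A (Sum.inr k) b) (fun k => -(A (Sum.inl k) b)) a := by
      intro a b
      cases a with
      | inl k =>
        simp [Matrix.mul_apply, symplJ, Fintype.sum_sum_type, Matrix.one_apply,
          ite_mul, Finset.sum_ite_eq, Finset.sum_ite_eq']
      | inr k =>
        simp [Matrix.mul_apply, symplJ, Fintype.sum_sum_type, Matrix.one_apply,
          ite_mul, Finset.sum_ite_eq, Finset.sum_ite_eq']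
    rw [Matrix.transpose_apply, hmul, hmul]
    cases i with
    | inl k =>
      cases j with
      | inl l => simp [hAinr, hsymm _ (Pi.single (Sum.inl k) 1)]
      | inr l => simp [hAinr, hAinl, hsymm _ (Pi.single (Sum.inl k) 1)]
    | inr k =>
      cases j with
      | inl l => simp [hAinr, hAinl, hsymm _ (Pi.single (Sum.inr k) 1)]
      | inr l => simp [hAinl, hsymm _ (Pi.single (Sum.inr k) 1)]
  have hAtJ : Aᵀ * symplJ n = -(symplJ n * A) := by
    have h1 : Aᵀ * (symplJ n)ᵀ = symplJ n * A := by
      rw [← Matrix.transpose_mul, hJA]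
    rw [symplJ_transpose] at h1
    rw [← h1]; rw [Matrix.mul_neg, neg_neg]
  have hAA : A * A = 1 := hsq x hx
  obtain ⟨hr1, hr2, hi1, hi2⟩ := key_lemma n A hAA hAtJ
  -- Jacobians of p₁ and p₂
  have hJac1 : jacM p₁ x = 1 + A := by
    have hp : HasFDerivAt p₁ (ContinuousLinearMap.id ℝ _ + ContinuousLinearMap.pi L) x := by
      have : p₁ = fun y => y + hamVF n F y := funext hp₁
      rw [this]
      exact (hasFDerivAt_id x).add hY
    ext i j
    rw [jacM, Matrix.of_apply, hp.fderiv]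
    simp only [ContinuousLinearMap.add_apply, ContinuousLinearMap.id_apply, Pi.add_apply,
      ContinuousLinearMap.pi_apply, Matrix.add_apply, Matrix.one_apply, hA]
    simp [Pi.single_apply, eq_comm]
  have hJac2 : jacM p₂ x = 1 - A := by
    have hp : HasFDerivAt p₂ (ContinuousLinearMap.id ℝ _ - ContinuousLinearMap.pi L) x := by
      have : p₂ = fun y => y - hamVF n F y := funext hp₂
      rw [this]
      exact (hasFDerivAt_id x).sub hY
    ext i j
    rw [jacM, Matrix.of_apply, hp.fderiv]
    simp only [ContinuousLinearMap.sub_apply, ContinuousLinearMap.id_apply, Pi.sub_apply,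
      ContinuousLinearMap.pi_apply, Matrix.sub_apply, Matrix.one_apply, hA]
    simp [Pi.single_apply, eq_comm]
  have hiso : ∀ M : Matrix (Fin n ⊕ Fin n) (Fin n ⊕ Fin n) ℝ,
      Mᵀ * (symplJ n * M) = 0 → ∀ u v, sform n (M.mulVec u) (M.mulVec v) = 0 := by
    intro M h0 u v
    have h0' : (symplJ n * M)ᵀ * M = 0 := by
      have := congrArg Matrix.transpose h0
      simpa [Matrix.transpose_mul, Matrix.mul_assoc] using this
    rw [sform_eq, Matrix.mulVec_mulVec, Matrix.dotProduct_mulVec,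
      ← Matrix.mulVec_transpose, Matrix.mulVec_mulVec, h0', Matrix.zero_mulVec,
      zero_dotProduct]
  refine ⟨by rw [hJac1, hr1], by rw [hJac2, hr2], ?_, ?_⟩
  · rw [hJac1]; exact hiso _ hi1
  · rw [hJac2]; exact hiso _ hi2
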